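/- Let μ > 0, δ > 0, 0 ≤ γ < 1 and bo > 0, and set ν = (1 + γδ)/(3δ(γ+δ)) − 1/bo. Define, for real k ≠ 0, ω²_{F.E.}(k) = (γ+δ)·|k|·tanh(√μ|k|)·(1 + μk²/bo)·tanh(√μ|k|/δ) / (√μ·(tanh(√μ|k|) + γ·tanh(√μ|k|/δ))). Then the function k ↦ ω²_{F.E.}(k) − k² + μνk⁴ is O(k⁶) as k → 0 through nonzero values. -/

import Mathlib

open Asymptotics Filter Topology

lemma exp_taylor5' (x : ℝ) (hx : |x| ≤ 1) :
    |Real.exp x - (1 + x + x^2/2 + x^3/6 + x^4/24)| ≤ |x|^5 / 100 := by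
  have h := Real.exp_bound hx (n := 5) (by norm_num)
  have hs : ∑ i ∈ Finset.range 5, x ^ i / (Nat.factorial i : ℝ)
      = 1 + x + x^2/2 + x^3/6 + x^4/24 := by
    rw [Finset.sum_range_succ, Finset.sum_range_succ, Finset.sum_range_succ,
      Finset.sum_range_succ, Finset.sum_range_succ, Finset.sum_range_zero]
    norm_num [Nat.factorial]
  rw [hs] at h
  calc |Real.exp x - (1 + x + x^2/2 + x^3/6 + x^4/24)|
      ≤ |x|^5 * ((5:ℕ).succ / ((Nat.factorial 5 : ℝ) * 5)) := h
    _ = |x|^5 / 100 := by norm_num [Nat.factorial]; ring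

lemma tanh_taylor' (x : ℝ) (hx : |x| ≤ 1) :
    |Real.tanh x - (x - x^3/3)| ≤ |x|^5 := by
  have hc : (1:ℝ) ≤ Real.cosh x := Real.one_le_cosh x
  have hc0 : (0:ℝ) < Real.cosh x := lt_of_lt_of_le one_pos hc
  -- key bound on sinh - (x - x^3/3) cosh
  have hu := exp_taylor5' x hx
  have hv := exp_taylor5' (-x) (by rwa [abs_neg])
  rw [abs_neg] at hv
  set u := Real.exp x - (1 + x + x^2/2 + x^3/6 + x^4/24) with hud
  set v := Real.exp (-x) - (1 + (-x) + (-x)^2/2 + (-x)^3/6 + (-x)^4/24) with hvd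
  have hid : Real.sinh x - (x - x^3/3) * Real.cosh x
      = x^5/8 + x^7/72 + (u - v)/2 - (x - x^3/3)*(u+v)/2 := by
    rw [Real.sinh_eq, Real.cosh_eq, hud, hvd]; ring
  have hx5 : (0:ℝ) ≤ |x|^5 := pow_nonneg (abs_nonneg x) 5
  have h5 : x^5 ≤ |x|^5 := by rw [← abs_pow]; exact le_abs_self _
  have h5' : -(|x|^5) ≤ x^5 := by rw [← abs_pow]; exact neg_abs_le _
  have h7a : |x^7| ≤ |x|^5 := by
    rw [abs_pow]; exact pow_le_pow_of_le_one (abs_nonneg x) hx (by norm_num)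
  have h7 : x^7 ≤ |x|^5 := le_trans (le_abs_self _) h7a
  have h7' : -(|x|^5) ≤ x^7 := neg_le_of_neg_le (le_trans (neg_le_abs _) h7a)
  have hq : |x - x^3/3| ≤ 4/3 := by
    have h3 : |x^3| ≤ 1 := by
      rw [abs_pow]; exact pow_le_one₀ (abs_nonneg x) hx
    calc |x - x^3/3| ≤ |x| + |x^3/3| := abs_sub _ _
      _ = |x| + |x^3|/3 := by rw [abs_div]; norm_num
      _ ≤ 1 + 1/3 := by gcongr
      _ = 4/3 := by norm_num
  have hprod : |(x - x^3/3)*(u+v)| ≤ (4/3) * (|x|^5/50) := by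
    rw [abs_mul]
    have : |u + v| ≤ |x|^5/50 := by
      calc |u + v| ≤ |u| + |v| := abs_add_le _ _
        _ ≤ |x|^5/100 + |x|^5/100 := by gcongr
        _ = |x|^5/50 := by ring
    exact mul_le_mul hq this (abs_nonneg _) (by norm_num)
  have hp1 : (x - x^3/3)*(u+v) ≤ (4/3)*(|x|^5/50) := le_trans (le_abs_self _) hprod
  have hp2 : -((4/3)*(|x|^5/50)) ≤ (x - x^3/3)*(u+v) :=
    neg_le_of_neg_le (le_trans (neg_le_abs _) hprod)
  have hu1 : u ≤ |x|^5/100 := le_trans (le_abs_self _) hu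
  have hu2 : -(|x|^5/100) ≤ u := neg_le_of_neg_le (le_trans (neg_le_abs _) hu)
  have hv1 : v ≤ |x|^5/100 := le_trans (le_abs_self _) hv
  have hv2 : -(|x|^5/100) ≤ v := neg_le_of_neg_le (le_trans (neg_le_abs _) hv)
  have key : |Real.sinh x - (x - x^3/3) * Real.cosh x| ≤ |x|^5 := by
    rw [hid, abs_le]; constructor <;> linarith
  have hid2 : Real.tanh x - (x - x^3/3)
      = (Real.sinh x - (x - x^3/3) * Real.cosh x) / Real.cosh x := by
    rw [Real.tanh_eq_sinh_div_cosh]; field_simp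
  rw [hid2, abs_div, abs_of_pos hc0]
  calc |Real.sinh x - (x - x^3/3) * Real.cosh x| / Real.cosh x
      ≤ |Real.sinh x - (x - x^3/3) * Real.cosh x| := div_le_self (abs_nonneg _) hc
    _ ≤ |x|^5 := key

lemma Tbound (x : ℝ) (hx0 : 0 < x) (hx1 : x ≤ 1) :
    |Real.tanh x / x - (1 - x^2/3)| ≤ x^4 := by
  have h := tanh_taylor' x (by rwa [abs_of_pos hx0])
  rw [abs_of_pos hx0] at h
  have hid : Real.tanh x / x - (1 - x^2/3) = (Real.tanh x - (x - x^3/3))/x := by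
    field_simp
  rw [hid, abs_div, abs_of_pos hx0]
  calc |Real.tanh x - (x - x^3/3)| / x ≤ x^5 / x := by gcongr
    _ = x^4 := by
        rw [pow_succ, mul_div_assoc, div_self hx0.ne', mul_one]

lemma tanh_pos' {x : ℝ} (hx : 0 < x) : 0 < Real.tanh x := by
  rw [Real.tanh_eq_sinh_div_cosh]
  exact div_pos (Real.sinh_pos_iff.mpr hx) (Real.cosh_pos x)


set_option maxHeartbeats 1000000 in
theorem stmt_5 (μ δ γ bo ν : ℝ) (hμ : 0 < μ) (hδ : 0 < δ) (hγ0 : 0 ≤ γ) (hγ1 : γ < 1)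
    (hbo : 0 < bo) (hν : ν = (1 + γ * δ) / (3 * δ * (γ + δ)) - 1 / bo) :
    (fun k : ℝ =>
        (γ + δ) * |k| * Real.tanh (Real.sqrt μ * |k|) * (1 + μ * k ^ 2 / bo)
            * Real.tanh (Real.sqrt μ * |k| / δ)
          / (Real.sqrt μ * (Real.tanh (Real.sqrt μ * |k|)
              + γ * Real.tanh (Real.sqrt μ * |k| / δ)))
        - k ^ 2 + μ * ν * k ^ 4)
    =O[nhdsWithin (0 : ℝ) {(0 : ℝ)}ᶜ] (fun k : ℝ => k ^ 6) := by
  have hm : 0 < Real.sqrt μ := Real.sqrt_pos.mpr hμ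
  have hm2 : Real.sqrt μ ^ 2 = μ := Real.sq_sqrt hμ.le
  have hγδ : 0 < γ + δ := by linarith
  set l := nhdsWithin (0 : ℝ) {(0 : ℝ)}ᶜ with hl
  set m := Real.sqrt μ with hmdef
  set A : ℝ → ℝ := fun k => Real.tanh (m * |k|) / (m * |k|) with hA
  set B : ℝ → ℝ := fun k => Real.tanh (m * |k| / δ) / (m * |k| / δ) with hB
  set t : ℝ → ℝ := fun k => μ * k ^ 2 with ht
  set RA : ℝ → ℝ := fun k => A k - (1 - t k / 3) with hRA
  set RB : ℝ → ℝ := fun k => B k - (1 - t k / (3 * δ ^ 2)) with hRB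
  set N : ℝ → ℝ := fun k =>
    (γ + δ) * (1 + t k / bo) * A k * B k - (1 - ν * t k) * (δ * A k + γ * B k) with hN
  set D : ℝ → ℝ := fun k => δ * A k + γ * B k with hD
  set q : ℝ → ℝ := fun s =>
    ((γ + δ) * (1 / (9 * δ ^ 2) - 1 / (3 * bo) - 1 / (3 * δ ^ 2 * bo))
      - ν * (δ / 3 + γ / (3 * δ ^ 2))) + s * ((γ + δ) / (9 * δ ^ 2 * bo)) with hq
  -- eventual facts
  have hne : ∀ᶠ k in l, k ≠ (0 : ℝ) := by
    rw [hl]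
    exact eventually_mem_nhdsWithin.mono fun k hk => hk
  have h0 : Tendsto (fun k : ℝ => m * |k|) l (𝓝 0) := by
    have hcont : Continuous fun k : ℝ => m * |k| := continuous_const.mul continuous_abs
    rw [hl]
    refine Tendsto.mono_left ?_ nhdsWithin_le_nhds
    simpa using hcont.tendsto 0
  have hsmallA : ∀ᶠ k in l, m * |k| ≤ 1 :=
    h0.eventually_le_const (by norm_num : (0:ℝ) < 1)
  have hsmallB : ∀ᶠ k in l, m * |k| / δ ≤ 1 := by
    have : Tendsto (fun k : ℝ => m * |k| / δ) l (𝓝 (0 / δ)) := h0.div_const δ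
    rw [zero_div] at this
    exact this.eventually_le_const (by norm_num : (0:ℝ) < 1)
  have htt : Tendsto t l (𝓝 0) := by
    have hcont : Continuous t := by rw [ht]; fun_prop
    rw [hl]
    refine Tendsto.mono_left ?_ nhdsWithin_le_nhds
    simpa [ht] using hcont.tendsto 0
  have hk4 : Tendsto (fun k : ℝ => k ^ 4) l (𝓝 0) := by
    rw [hl]
    refine Tendsto.mono_left ?_ nhdsWithin_le_nhds
    simpa using (continuous_pow 4).tendsto (0:ℝ)
  have hk4norm : ∀ k : ℝ, ‖k ^ 4‖ = k ^ 4 := by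
    intro k
    rw [Real.norm_eq_abs, abs_of_nonneg (by positivity)]
  -- big-O bounds on remainders
  have hRAo : RA =O[l] fun k => k ^ 4 := by
    rw [isBigO_iff]
    refine ⟨μ ^ 2, ?_⟩
    filter_upwards [hne, hsmallA] with k hk h1
    have hak : 0 < m * |k| := mul_pos hm (abs_pos.mpr hk)
    have hsq : (m * |k|) ^ 2 = t k := by rw [mul_pow, hm2, sq_abs]
    have hb := Tbound (m * |k|) hak h1
    rw [hsq] at hb
    have : RA k = Real.tanh (m * |k|) / (m * |k|) - (1 - t k / 3) := rfl
    rw [Real.norm_eq_abs, this, hk4norm]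
    calc |Real.tanh (m*|k|)/(m*|k|) - (1 - t k/3)| ≤ (m*|k|)^4 := hb
      _ = μ ^ 2 * k ^ 4 := by
          rw [mul_pow]
          rw [show m ^ 4 = (m^2)^2 by ring, hm2, show |k|^4 = (|k|^2)^2 by ring, sq_abs]
          ring
  have hRBo : RB =O[l] fun k => k ^ 4 := by
    rw [isBigO_iff]
    refine ⟨μ ^ 2 / δ ^ 4, ?_⟩
    filter_upwards [hne, hsmallB] with k hk h1
    have hak : 0 < m * |k| / δ := div_pos (mul_pos hm (abs_pos.mpr hk)) hδ
    have hsq : (m * |k| / δ) ^ 2 = t k / δ ^ 2 := by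
      rw [div_pow, mul_pow, hm2, sq_abs]
    have hb := Tbound (m * |k| / δ) hak h1
    rw [hsq] at hb
    have heq : RB k = Real.tanh (m*|k|/δ)/(m*|k|/δ) - (1 - (t k / δ^2) / 3) := by
      show B k - (1 - t k / (3 * δ ^ 2)) = _
      rw [hB]
      ring_nf
    rw [Real.norm_eq_abs, heq, hk4norm]
    calc |Real.tanh (m*|k|/δ)/(m*|k|/δ) - (1 - (t k/δ^2)/3)| ≤ (m*|k|/δ)^4 := hb
      _ = μ ^ 2 / δ ^ 4 * k ^ 4 := by
          rw [div_pow, mul_pow]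
          rw [show m ^ 4 = (m^2)^2 by ring, hm2, show |k|^4 = (|k|^2)^2 by ring, sq_abs]
          ring
  -- limits
  have hRA0 : Tendsto RA l (𝓝 0) := hRAo.trans_tendsto hk4
  have hRB0 : Tendsto RB l (𝓝 0) := hRBo.trans_tendsto hk4
  have hAt : Tendsto A l (𝓝 1) := by
    have h1 : Tendsto (fun k => (1 - t k / 3) + RA k) l (𝓝 ((1 - 0/3) + 0)) :=
      (tendsto_const_nhds.sub (htt.div_const 3)).add hRA0
    have h2 : (fun k => (1 - t k / 3) + RA k) = A := by
      funext k; rw [hRA]; ring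
    rw [h2] at h1
    simpa using h1
  have hBt : Tendsto B l (𝓝 1) := by
    have h1 : Tendsto (fun k => (1 - t k / (3 * δ^2)) + RB k) l (𝓝 ((1 - 0/(3*δ^2)) + 0)) :=
      (tendsto_const_nhds.sub (htt.div_const (3*δ^2))).add hRB0
    have h2 : (fun k => (1 - t k / (3 * δ^2)) + RB k) = B := by
      funext k; rw [hRB]; ring
    rw [h2] at h1
    simpa using h1
  have hDt : Tendsto D l (𝓝 (δ + γ)) := by
    have := (hAt.const_mul δ).add (hBt.const_mul γ)
    simpa [hD] using this
  have hDne : δ + γ ≠ 0 := by positivity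
  have hDinvO : (fun k => (D k)⁻¹) =O[l] (fun _ => (1:ℝ)) :=
    (hDt.inv₀ hDne).isBigO_one ℝ
  -- polynomial identity
  have hpoly : ∀ s : ℝ,
      (γ+δ)*(1+s/bo)*(1-s/3)*(1-s/(3*δ^2)) - (1-ν*s)*(δ*(1-s/3)+γ*(1-s/(3*δ^2)))
        = s^2 * q s := by
    intro s
    rw [hq, hν]
    field_simp
    ring
  have hNid : ∀ k : ℝ, N k = (t k)^2 * q (t k)
      + (γ+δ)*(1+t k/bo)*(A k * RB k + RA k * (1 - t k/(3*δ^2)))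
      - (1-ν*t k)*(δ*RA k + γ*RB k) := by
    intro k
    have h := hpoly (t k)
    simp only [hN, hRA, hRB]
    linear_combination h
  -- big-O pieces
  have htO : t =O[l] fun k => k ^ 2 := by
    have h := isBigO_const_mul_self μ (fun k : ℝ => k ^ 2) l
    exact h.congr_left fun k => rfl
  have ht2O : (fun k => (t k)^2) =O[l] fun k => k ^ 4 := by
    have := htO.pow 2
    refine this.congr_right fun k => ?_
    rw [← pow_mul]
  have hqO : (fun k => q (t k)) =O[l] fun _ => (1:ℝ) := by
    have hc : Continuous q := by fun_prop
    exact (((hc.tendsto 0).comp htt)).isBigO_one ℝ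
  have hone : ∀ {f : ℝ → ℝ} (c : ℝ), Tendsto f l (𝓝 c) → f =O[l] fun _ => (1:ℝ) :=
    fun c h => h.isBigO_one ℝ
  have hfac1 : (fun k => (γ+δ)*(1+t k/bo)) =O[l] fun _ => (1:ℝ) := by
    refine hone ((γ+δ)*(1+0/bo)) ?_
    exact tendsto_const_nhds.mul (tendsto_const_nhds.add (htt.div_const bo))
  have hfac2 : (fun k => 1 - ν * t k) =O[l] fun _ => (1:ℝ) := by
    refine hone (1 - ν * 0) ?_
    exact tendsto_const_nhds.sub (htt.const_mul ν)
  have hfac3 : (fun k => 1 - t k/(3*δ^2)) =O[l] fun _ => (1:ℝ) := by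
    refine hone (1 - 0/(3*δ^2)) ?_
    exact tendsto_const_nhds.sub (htt.div_const _)
  have hAO : A =O[l] fun _ => (1:ℝ) := hone 1 hAt
  have piece1 : (fun k => (t k)^2 * q (t k)) =O[l] fun k => k ^ 4 := by
    have := ht2O.mul hqO
    exact this.congr_right fun k => mul_one _
  have inner : (fun k => A k * RB k + RA k * (1 - t k/(3*δ^2))) =O[l] fun k => k ^ 4 := by
    have h1 : (fun k => A k * RB k) =O[l] fun k => k ^ 4 := by
      have := hAO.mul hRBo
      exact this.congr_right fun k => one_mul _
    have h2 : (fun k => RA k * (1 - t k/(3*δ^2))) =O[l] fun k => k ^ 4 := by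
      have := hRAo.mul hfac3
      exact this.congr_right fun k => mul_one _
    exact h1.add h2
  have piece2 : (fun k => (γ+δ)*(1+t k/bo)*(A k * RB k + RA k * (1 - t k/(3*δ^2))))
      =O[l] fun k => k ^ 4 := by
    have := hfac1.mul inner
    exact this.congr_right fun k => one_mul _
  have piece3 : (fun k => (1-ν*t k)*(δ*RA k + γ*RB k)) =O[l] fun k => k ^ 4 := by
    have hsum : (fun k => δ*RA k + γ*RB k) =O[l] fun k => k ^ 4 :=
      (hRAo.const_mul_left δ).add (hRBo.const_mul_left γ)
    have := hfac2.mul hsum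
    exact this.congr_right fun k => one_mul _
  have hNo : N =O[l] fun k => k ^ 4 := by
    have h2 := (piece1.add piece2).sub piece3
    exact h2.congr (fun k => (hNid k).symm) fun k => rfl
  -- key identity
  have hkey : ∀ᶠ k in l,
      (γ + δ) * |k| * Real.tanh (m * |k|) * (1 + μ * k ^ 2 / bo)
            * Real.tanh (m * |k| / δ)
          / (m * (Real.tanh (m * |k|) + γ * Real.tanh (m * |k| / δ)))
        - k ^ 2 + μ * ν * k ^ 4
      = k ^ 2 * N k * (D k)⁻¹ := by
    filter_upwards [hne] with k hk
    have hK : 0 < |k| := abs_pos.mpr hk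
    have ha : 0 < m * |k| := mul_pos hm hK
    have hb : 0 < m * |k| / δ := div_pos ha hδ
    have hta : 0 < Real.tanh (m * |k|) := tanh_pos' ha
    have htb : 0 < Real.tanh (m * |k| / δ) := tanh_pos' hb
    have hden : 0 < Real.tanh (m * |k|) + γ * Real.tanh (m * |k| / δ) := by
      have := mul_nonneg hγ0 htb.le
      linarith
    have hDpos : 0 < δ * (Real.tanh (m*|k|)/(m*|k|)) + γ * (Real.tanh (m*|k|/δ)/(m*|k|/δ)) := by
      have h1 : 0 < Real.tanh (m*|k|)/(m*|k|) := div_pos hta ha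
      have h2 : 0 ≤ Real.tanh (m*|k|/δ)/(m*|k|/δ) := (div_pos htb hb).le
      have h3 := mul_nonneg hγ0 h2
      have h4 := mul_pos hδ h1
      linarith
    have hk2 : k ^ 2 = |k| ^ 2 := (sq_abs k).symm
    have hk4' : k ^ 4 = |k| ^ 4 := by
      rw [show (4:ℕ) = 2*2 from rfl, pow_mul, pow_mul, sq_abs]
    simp only [hD, hN, hA, hB, ht]
    rw [hk2, hk4', ← hm2]
    generalize hg : |k| = K at hK ha hden hDpos ⊢
    have hK0 : K ≠ 0 := ne_of_gt hK
    rw [eq_mul_inv_iff_mul_eq₀ (ne_of_gt hDpos)]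
    have hden' : Real.tanh (m * K) + γ * Real.tanh (m * K / δ) ≠ 0 := ne_of_gt hden
    have hδ' : δ ≠ 0 := ne_of_gt hδ
    have hm' : m ≠ 0 := ne_of_gt hm
    generalize Real.tanh (m * K) = ta at hden' ⊢
    generalize Real.tanh (m * K / δ) = tb at hden' ⊢
    field_simp
    ring
  -- assemble
  have hfinal : (fun k => k ^ 2 * N k * (D k)⁻¹) =O[l] fun k : ℝ => k ^ 6 := by
    have h := ((isBigO_refl (fun k : ℝ => k ^ 2) l).mul hNo).mul hDinvO
    exact h.congr_right fun k => by ring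
  exact Filter.EventuallyEq.trans_isBigO hkey hfinal
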